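/- Let μ ∈ ℂ with Im μ ≤ 0, θ_∞ ∈ ℂ, Λ ∈ ℝ with 1 - 2(Im μ)Λ > 0 and 1 - 2 Im μ (|θ_∞|²σ + Λ) > 0 for all σ ≥ 0. Define A(τ) = θ_∞ exp(-i|θ_∞|² (Re μ) ∫_0^τ dσ/(1 - 2 Im μ(|θ_∞|²σ + Λ))) / √(1 - 2 Im μ(|θ_∞|²τ + Λ)). Then A is differentiable on [0,∞) and satisfies i A'(τ) = μ |A(τ)|² A(τ) with A(0) = θ_∞ / √(1 - 2(Im μ)Λ). -/

import Mathlib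

/-- The explicit function A(τ) built from θ_∞, Λ, μ solves i A' = μ|A|²A with
    A(0) = θ_∞/√(1 - 2(Im μ)Λ). -/
theorem stmt_15 (μ : ℂ) (hμ : μ.im ≤ 0) (θinf : ℂ) (Λ : ℝ)
    (hΛ : 0 < 1 - 2 * μ.im * Λ)
    (hpos : ∀ σ : ℝ, 0 ≤ σ → 0 < 1 - 2 * μ.im * (‖θinf‖ ^ 2 * σ + Λ))
    (A : ℝ → ℂ)
    (hA : ∀ τ : ℝ, A τ =
      θinf * Complex.exp (-Complex.I * (‖θinf‖ ^ 2 : ℂ) * (μ.re : ℂ)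
          * ((∫ σ in (0 : ℝ)..τ, 1 / (1 - 2 * μ.im * (‖θinf‖ ^ 2 * σ + Λ))) : ℝ))
        / ((Real.sqrt (1 - 2 * μ.im * (‖θinf‖ ^ 2 * τ + Λ)) : ℝ) : ℂ)) :
    (∀ τ : ℝ, 0 ≤ τ →
      HasDerivAt A (-Complex.I * (μ * (‖A τ‖ : ℂ) ^ 2 * A τ)) τ) ∧
    A 0 = θinf / ((Real.sqrt (1 - 2 * μ.im * Λ) : ℝ) : ℂ) := by
  constructor
  · intro τ hτ
    have hfτ : 0 < 1 - 2 * μ.im * (‖θinf‖ ^ 2 * τ + Λ) := hpos τ hτ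
    have hsτ : 0 < Real.sqrt (1 - 2 * μ.im * (‖θinf‖ ^ 2 * τ + Λ)) := Real.sqrt_pos.mpr hfτ
    have hcontf : Continuous fun σ : ℝ => 1 - 2 * μ.im * (‖θinf‖ ^ 2 * σ + Λ) := by
      continuity
    -- derivative of the affine map
    have hdf : HasDerivAt (fun σ : ℝ => 1 - 2 * μ.im * (‖θinf‖ ^ 2 * σ + Λ))
        (-(2 * μ.im * ‖θinf‖ ^ 2)) τ := by
      have h1 : HasDerivAt (fun σ : ℝ => ‖θinf‖ ^ 2 * σ + Λ) (‖θinf‖ ^ 2) τ := by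
        simpa using ((hasDerivAt_id τ).const_mul (‖θinf‖ ^ 2)).add_const Λ
      exact (h1.const_mul (2 * μ.im)).const_sub 1
    -- derivative of the square root factor
    have hsqrt : HasDerivAt (fun t : ℝ => Real.sqrt (1 - 2 * μ.im * (‖θinf‖ ^ 2 * t + Λ)))
        (-(2 * μ.im * ‖θinf‖ ^ 2) /
          (2 * Real.sqrt (1 - 2 * μ.im * (‖θinf‖ ^ 2 * τ + Λ)))) τ :=
      hdf.sqrt hfτ.ne'
    -- derivative of the integral
    have hint : IntervalIntegrable
        (fun σ : ℝ => 1 / (1 - 2 * μ.im * (‖θinf‖ ^ 2 * σ + Λ)))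
        MeasureTheory.volume 0 τ := by
      apply ContinuousOn.intervalIntegrable
      apply ContinuousOn.div continuousOn_const hcontf.continuousOn
      intro σ hσ
      rw [Set.uIcc_of_le hτ] at hσ
      exact (hpos σ hσ.1).ne'
    have hmeas : StronglyMeasurableAtFilter
        (fun σ : ℝ => 1 / (1 - 2 * μ.im * (‖θinf‖ ^ 2 * σ + Λ)))
        (nhds τ) MeasureTheory.volume := by
      apply MeasureTheory.StronglyMeasurable.stronglyMeasurableAtFilter
      apply Measurable.stronglyMeasurable
      exact measurable_const.div hcontf.measurable
    have hg : HasDerivAt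
        (fun t : ℝ => ∫ σ in (0:ℝ)..t, 1 / (1 - 2 * μ.im * (‖θinf‖ ^ 2 * σ + Λ)))
        (1 / (1 - 2 * μ.im * (‖θinf‖ ^ 2 * τ + Λ))) τ :=
      intervalIntegral.integral_hasDerivAt_right hint hmeas
        (ContinuousAt.div continuousAt_const hcontf.continuousAt hfτ.ne')
    -- complexified derivatives
    have hE : HasDerivAt
        (fun t : ℝ => Complex.exp (-Complex.I * (‖θinf‖ ^ 2 : ℂ) * (μ.re : ℂ)
          * ((∫ σ in (0:ℝ)..t, 1 / (1 - 2 * μ.im * (‖θinf‖ ^ 2 * σ + Λ)) : ℝ) : ℂ)))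
        (Complex.exp (-Complex.I * (‖θinf‖ ^ 2 : ℂ) * (μ.re : ℂ)
          * ((∫ σ in (0:ℝ)..τ, 1 / (1 - 2 * μ.im * (‖θinf‖ ^ 2 * σ + Λ)) : ℝ) : ℂ))
          * (-Complex.I * (‖θinf‖ ^ 2 : ℂ) * (μ.re : ℂ)
            * ((1 / (1 - 2 * μ.im * (‖θinf‖ ^ 2 * τ + Λ)) : ℝ) : ℂ))) τ :=
      (hg.ofReal_comp.const_mul ((-Complex.I * (‖θinf‖ ^ 2 : ℂ) * (μ.re : ℂ)) : ℂ)).cexp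
    have hsCne : ((Real.sqrt (1 - 2 * μ.im * (‖θinf‖ ^ 2 * τ + Λ)) : ℝ) : ℂ) ≠ 0 := by
      exact_mod_cast hsτ.ne'
    have hDen := hsqrt.ofReal_comp
    have hAeq : A = fun t : ℝ =>
        θinf * Complex.exp (-Complex.I * (‖θinf‖ ^ 2 : ℂ) * (μ.re : ℂ)
          * ((∫ σ in (0:ℝ)..t, 1 / (1 - 2 * μ.im * (‖θinf‖ ^ 2 * σ + Λ)) : ℝ) : ℂ))
          / (((Real.sqrt (1 - 2 * μ.im * (‖θinf‖ ^ 2 * t + Λ)) : ℝ) : ℂ)) := funext hA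
    have hD := (hE.const_mul (θinf : ℂ)).div hDen hsCne
    rw [hAeq]
    convert hD using 1
    · rfl
    · rfl
    beta_reduce
    set S := Real.sqrt (1 - 2 * μ.im * (‖θinf‖ ^ 2 * τ + Λ)) with hSdef
    set E := Complex.exp (-Complex.I * (‖θinf‖ ^ 2 : ℂ) * (μ.re : ℂ)
          * ((∫ σ in (0:ℝ)..τ, 1 / (1 - 2 * μ.im * (‖θinf‖ ^ 2 * σ + Λ)) : ℝ) : ℂ)) with hEdef
    have hnorm : ‖θinf * E / (S : ℂ)‖ = ‖θinf‖ / S := by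
      rw [norm_div, norm_mul, Complex.norm_real, Real.norm_of_nonneg hsτ.le]
      have h1 : ‖E‖ = 1 := by
        rw [hEdef, Complex.norm_exp]
        norm_num
        exact Or.inl (Or.inl (by rw [← Complex.ofReal_pow]; exact Complex.ofReal_im _))
      rw [h1, mul_one]
    rw [hnorm]
    have hS2 : (1 - 2 * μ.im * (‖θinf‖ ^ 2 * τ + Λ)) = S ^ 2 := (Real.sq_sqrt hfτ.le).symm
    rw [hS2]
    have hSne : (S : ℂ) ≠ 0 := hsCne
    push_cast
    field_simp
    ring_nf
    linear_combination
      (Complex.I * (((‖θinf‖ : ℝ) : ℂ)^2 * θinf * E)) * Complex.re_add_im μ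
      + (-(μ.im : ℂ) * (((‖θinf‖ : ℝ) : ℂ)^2 * θinf * E)) * Complex.I_sq
  · rw [hA 0]
    norm_num
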